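/- If a string P of length m has a substring of length L all of whose k-mers pass the filter, then P has at least one pseudo-MEM, and the total length of all pseudo-MEMs of P is at most m + (number of pseudo-MEMs − 1)·(k − 2). -/
import Mathlib


open List

variable {α : Type*}

/-- `substr P i j` is the substring `P[i..j]` (inclusive indices). -/
def substr (P : List α) (i j : ℕ) : List α := (P.drop i).take (j - i + 1)

/-- `IsMEM T P i j` : `P[i..j]` is a maximal exact match of `P` w.r.t. `T`:
it occurs in `T`, and it can be extended neither to the left nor to the right
within `P` while still occurring in `T`. -/
def IsMEM (T P : List α) (i j : ℕ) : Prop :=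
  i ≤ j ∧ j < P.length ∧ substr P i j <:+: T ∧
  (i = 0 ∨ ¬ substr P (i - 1) j <:+: T) ∧
  (j = P.length - 1 ∨ ¬ substr P i (j + 1) <:+: T)

/-- All length-`k` substrings (`k`-mers) of `S` pass the filter `F`. -/
def kmersPass (F : List α → Bool) (k : ℕ) (S : List α) : Prop :=
  ∀ w : List α, w.length = k → w <:+: S → F w = true

/-- `IsPseudoMEM F k L P i j` : `P[i..j]` is a maximal substring of `P` of length
at least `L` all of whose `k`-mers pass the filter `F`. -/
def IsPseudoMEM (F : List α → Bool) (k L : ℕ) (P : List α) (i j : ℕ) : Prop :=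
  i ≤ j ∧ j < P.length ∧ L ≤ j - i + 1 ∧ kmersPass F k (substr P i j) ∧
  (i = 0 ∨ ¬ kmersPass F k (substr P (i - 1) j)) ∧
  (j = P.length - 1 ∨ ¬ kmersPass F k (substr P i (j + 1)))

/-- `F` has no false negatives for the `k`-mers of `T`. -/
def NoFalseNeg (F : List α → Bool) (k : ℕ) (T : List α) : Prop :=
  ∀ w : List α, w.length = k → w <:+: T → F w = true

-- The finite set of (intervals of) pseudo-MEMs of `P`.
open Classical in
noncomputable def pseudoMEMs (F : List α → Bool) (k L : ℕ) (P : List α) :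
    Finset (ℕ × ℕ) :=
  (Finset.range P.length ×ˢ Finset.range P.length).filter
    (fun ij => IsPseudoMEM F k L P ij.1 ij.2)

lemma substr_drop (P : List α) (i j q : ℕ) (h : i + q ≤ j) :
    (substr P i j).drop q = substr P (i + q) j := by
  simp only [substr, List.drop_take, List.drop_drop]
  congr 1
  omega

lemma substr_take (P : List α) (i j n : ℕ) (h1 : 1 ≤ n) (h2 : n ≤ j - i + 1) :
    (substr P i j).take n = substr P i (i + n - 1) := by
  simp only [substr, List.take_take]
  congr 1
  omega

lemma substr_length (P : List α) {i j : ℕ} (h1 : i ≤ j) (h2 : j < P.length) :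
    (substr P i j).length = j - i + 1 := by
  simp only [substr, List.length_take, List.length_drop]
  omega

lemma substr_infix (P : List α) {i j i' j' : ℕ} (h1 : i' ≤ i) (h2 : j ≤ j') (h3 : i ≤ j) :
    substr P i j <:+: substr P i' j' := by
  have e1 : (substr P i' j').drop (i - i') = substr P i j' := by
    rw [substr_drop P i' j' (i - i') (by omega)]
    congr 1
    omega
  have e2 : substr P i j = ((substr P i' j').drop (i - i')).take (j - i + 1) := by
    rw [e1, substr_take P i j' (j - i + 1) (by omega) (by omega)]
    congr 1
    omega
  rw [e2]
  exact (List.take_prefix _ _).isInfix.trans (List.drop_suffix _ _).isInfix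

lemma kmersPass_mono {F : List α → Bool} {k : ℕ} {S T : List α}
    (h : kmersPass F k S) (hi : T <:+: S) : kmersPass F k T :=
  fun w hw hwi => h w hw (hwi.trans hi)

lemma not_ext_right {F : List α → Bool} {k L : ℕ} {P : List α} {i j i' j' : ℕ}
    (h1 : IsPseudoMEM F k L P i j) (h2 : kmersPass F k (substr P i' j'))
    (hii : i' ≤ i) (hjj : j < j') (hj' : j' < P.length) : False := by
  have hij := h1.1
  rcases h1.2.2.2.2.2 with h | h
  · omega
  · exact h (kmersPass_mono h2 (substr_infix P hii (by omega) (by omega)))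

lemma not_ext_left {F : List α → Bool} {k L : ℕ} {P : List α} {i j i' j' : ℕ}
    (h1 : IsPseudoMEM F k L P i j) (h2 : kmersPass F k (substr P i' j'))
    (hii : i' < i) (hjj : j ≤ j') : False := by
  have hij := h1.1
  rcases h1.2.2.2.2.1 with h | h
  · omega
  · exact h (kmersPass_mono h2 (substr_infix P (by omega) hjj (by omega : i - 1 ≤ j)))

lemma pm_mono {F : List α → Bool} {k L : ℕ} {P : List α} {i1 j1 i2 j2 : ℕ}
    (h1 : IsPseudoMEM F k L P i1 j1) (h2 : IsPseudoMEM F k L P i2 j2)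
    (h12 : i1 < i2) : j1 < j2 := by
  by_contra hcon
  exact not_ext_left h2 h1.2.2.2.1 h12 (by omega)

lemma pm_start_inj {F : List α → Bool} {k L : ℕ} {P : List α} {i j1 j2 : ℕ}
    (h1 : IsPseudoMEM F k L P i j1) (h2 : IsPseudoMEM F k L P i j2) : j1 = j2 := by
  rcases lt_trichotomy j1 j2 with h | h | h
  · exact absurd (not_ext_right h1 h2.2.2.2.1 le_rfl h h2.2.1) id
  · exact h
  · exact absurd (not_ext_right h2 h1.2.2.2.1 le_rfl h h1.2.1) id

lemma pm_overlap {F : List α → Bool} {k L : ℕ} {P : List α} (hk : 2 ≤ k) {i1 j1 i2 j2 : ℕ}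
    (h1 : IsPseudoMEM F k L P i1 j1) (h2 : IsPseudoMEM F k L P i2 j2)
    (h12 : i1 < i2) : j1 + 1 ≤ i2 + (k - 2) := by
  by_contra hcon
  push_neg at hcon
  have hj12 : j1 < j2 := pm_mono h1 h2 h12
  have hij1 : i1 ≤ j1 := h1.1
  have hij2 : i2 ≤ j2 := h2.1
  have hlen : j1 + 1 < P.length := by have := h2.2.1; omega
  have hpass : kmersPass F k (substr P i1 (j1 + 1)) := by
    intro w hw hwi
    obtain ⟨s, t, hst⟩ := hwi
    have hS : (substr P i1 (j1 + 1)).length = j1 + 2 - i1 :=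
      by rw [substr_length P (by omega) hlen]; omega
    have hlens : s.length + k + t.length = j1 + 2 - i1 := by
      have := congrArg List.length hst
      simp only [List.length_append, hw, hS] at this
      omega
    set p := s.length with hp
    have hd : (substr P i1 (j1 + 1)).drop p = w ++ t := by
      rw [← hst, List.append_assoc, List.drop_left]
    have hw' : w = ((substr P i1 (j1 + 1)).drop p).take k := by
      rw [hd, ← hw, List.take_left]
    have hq : i1 + p ≤ j1 := by omega
    rw [substr_drop P i1 (j1 + 1) p (by omega),
        substr_take P (i1 + p) (j1 + 1) k (by omega) (by omega)] at hw'
    set q := i1 + p with hqdef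
    by_cases hc : q + k - 1 ≤ j1
    · exact h1.2.2.2.1 w hw (hw' ▸ substr_infix P (by omega) hc (by omega))
    · have hc2 : q + k - 1 = j1 + 1 := by omega
      exact h2.2.2.2.1 w hw (hw' ▸ substr_infix P (by omega) (by omega) (by omega))
  exact not_ext_right h1 hpass le_rfl (by omega) hlen

lemma pm_sum_le {F : List α → Bool} {k L : ℕ} {P : List α} (hk : 2 ≤ k) :
    ∀ (n : ℕ) (S : Finset (ℕ × ℕ)), S.card = n →
      (∀ p ∈ S, IsPseudoMEM F k L P p.1 p.2) →
      ∀ x ∈ S, (∀ y ∈ S, y.1 ≤ x.1) →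
      ∑ ij ∈ S, (ij.2 - ij.1 + 1) ≤ x.2 + 1 + (S.card - 1) * (k - 2) := by
  intro n
  induction n using Nat.strong_induction_on with
  | _ n ih =>
    intro S hcard hpm x hx hmax
    have hsum : ∑ ij ∈ S.erase x, (ij.2 - ij.1 + 1) + (x.2 - x.1 + 1) =
        ∑ ij ∈ S, (ij.2 - ij.1 + 1) := Finset.sum_erase_add S _ hx
    have hxij := (hpm x hx).1
    rcases Finset.eq_empty_or_nonempty (S.erase x) with he | hne
    · have : S = {x} := by
        apply Finset.eq_singleton_iff_unique_mem.2
        exact ⟨hx, fun y hy => by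
          by_contra hyx
          exact (Finset.eq_empty_iff_forall_notMem.1 he) y (Finset.mem_erase.2 ⟨hyx, hy⟩)⟩
      rw [this]
      simp only [Finset.sum_singleton, Finset.card_singleton]
      omega
    · obtain ⟨x', hx', hmax'⟩ := Finset.exists_max_image (S.erase x) Prod.fst hne
      have hx'S : x' ∈ S := Finset.mem_of_mem_erase hx'
      have hcard' : (S.erase x).card = n - 1 := by
        rw [Finset.card_erase_of_mem hx, hcard]
      have hn1 : 1 ≤ n := by
        rw [← hcard]; exact Finset.card_pos.2 ⟨x, hx⟩
      have hn2 : 2 ≤ n := by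
        rw [← hcard]
        have := Finset.card_erase_of_mem hx
        have := Finset.card_pos.2 hne
        omega
      have hlt : x'.1 < x.1 := by
        rcases lt_or_eq_of_le (hmax x' hx'S) with h | h
        · exact h
        · exfalso
          have := pm_start_inj (h ▸ hpm x' hx'S) (hpm x hx)
          exact (Finset.mem_erase.1 hx').1 (Prod.ext h this)
      have hov : x'.2 + 1 ≤ x.1 + (k - 2) :=
        pm_overlap hk (hpm x' hx'S) (hpm x hx) hlt
      have hIH := ih (n - 1) (by omega) (S.erase x) hcard'
        (fun p hp => hpm p (Finset.mem_of_mem_erase hp)) x' hx' hmax'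
      rw [hcard'] at hIH
      rw [← hsum, hcard]
      obtain ⟨c, hc⟩ : ∃ c, n - 1 = c + 1 := ⟨n - 2, by omega⟩
      rw [hc] at hIH
      have e1 : (c + 1 - 1) * (k - 2) = c * (k - 2) := by norm_num
      have e2 : (n - 1) * (k - 2) = c * (k - 2) + (k - 2) := by
        have : n - 1 = c + 1 := hc
        rw [this, add_mul, one_mul]
      rw [e1] at hIH
      rw [e2]
      generalize c * (k - 2) = A at hIH ⊢
      omega

/-- if `P` (of length `m`) has a substring of length `L` all of
whose `k`-mers pass `F`, then `P` has at least one pseudo-MEM, and the total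
length of all pseudo-MEMs of `P` is at most
`m + (number of pseudo-MEMs − 1)·(k − 2)`. -/
theorem pseudoMEMs_total_length (F : List α → Bool) (k L m : ℕ) (P : List α)
    (hk : 2 ≤ k) (hkL : k < L) (hm : P.length = m)
    (hex : ∃ a b, a ≤ b ∧ b < P.length ∧ b - a + 1 = L ∧
      kmersPass F k (substr P a b)) :
    (pseudoMEMs F k L P).Nonempty ∧
    ∑ ij ∈ pseudoMEMs F k L P, (ij.2 - ij.1 + 1) ≤
      m + ((pseudoMEMs F k L P).card - 1) * (k - 2) := by
  classical
  obtain ⟨a, b, hab, hbP, hL, hkp⟩ := hex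
  -- candidate extensions of [a,b]
  set C : Finset (ℕ × ℕ) :=
    (Finset.range P.length ×ˢ Finset.range P.length).filter
      (fun ij => ij.1 ≤ a ∧ b ≤ ij.2 ∧ kmersPass F k (substr P ij.1 ij.2)) with hC
  have hmemC : ∀ ij : ℕ × ℕ, ij ∈ C ↔
      ij.1 < P.length ∧ ij.2 < P.length ∧ ij.1 ≤ a ∧ b ≤ ij.2 ∧
      kmersPass F k (substr P ij.1 ij.2) := by
    intro ij
    simp [hC, Finset.mem_filter, Finset.mem_product, and_assoc]
  have habC : (a, b) ∈ C := (hmemC (a, b)).2 ⟨by omega, hbP, le_rfl, le_rfl, hkp⟩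
  obtain ⟨x, hxC, hxmax⟩ := Finset.exists_max_image C (fun ij => ij.2 - ij.1) ⟨(a, b), habC⟩
  obtain ⟨hx1, hx2, hxa, hxb, hxkp⟩ := (hmemC x).1 hxC
  have hxij : x.1 ≤ x.2 := by omega
  have hpmx : IsPseudoMEM F k L P x.1 x.2 := by
    refine ⟨hxij, hx2, by omega, hxkp, ?_, ?_⟩
    · by_cases h0 : x.1 = 0
      · exact Or.inl h0
      · refine Or.inr (fun hkp' => ?_)
        have hmem : (x.1 - 1, x.2) ∈ C := (hmemC _).2 ⟨by omega, hx2, by omega, hxb, hkp'⟩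
        have := hxmax _ hmem
        simp only at this
        omega
    · by_cases h0 : x.2 = P.length - 1
      · exact Or.inl h0
      · refine Or.inr (fun hkp' => ?_)
        have hmem : (x.1, x.2 + 1) ∈ C := (hmemC _).2 ⟨hx1, by omega, hxa, by omega, hkp'⟩
        have := hxmax _ hmem
        simp only at this
        omega
  have hmemPM : ∀ ij : ℕ × ℕ, ij ∈ pseudoMEMs F k L P ↔ IsPseudoMEM F k L P ij.1 ij.2 := by
    intro ij
    constructor
    · intro h
      exact (Finset.mem_filter.1 h).2
    · intro h
      refine Finset.mem_filter.2 ⟨Finset.mem_product.2 ⟨?_, ?_⟩, h⟩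
      · exact Finset.mem_range.2 (by have := h.1; have := h.2.1; omega)
      · exact Finset.mem_range.2 h.2.1
  have hne : (pseudoMEMs F k L P).Nonempty := ⟨x, (hmemPM x).2 hpmx⟩
  refine ⟨hne, ?_⟩
  obtain ⟨y, hy, hymax⟩ := Finset.exists_max_image (pseudoMEMs F k L P) Prod.fst hne
  have hbound := pm_sum_le hk (pseudoMEMs F k L P).card (pseudoMEMs F k L P) rfl
    (fun p hp => (hmemPM p).1 hp) y hy hymax
  have hy2 : y.2 < P.length := ((hmemPM y).1 hy).2.1
  omega
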